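/- Let X be a set with at least 2 elements and ρ ⊆ X × X a binary relation such that for every two-element subset {x, y} of X at least one of (x, y), (y, x), (x, x), (y, y) belongs to ρ. Then ρ is minimal with this property (no proper subrelation has it) if and only if there exist a proper subset R ⊊ X and a tournament σ on X ∖ R (an irreflexive relation such that for all distinct x, y ∈ X ∖ R exactly one of (x, y) ∈ σ, (y, x) ∈ σ holds) such that ρ = σ ∪ Δ_R, where Δ_R = {(x, x) : x ∈ R}. -/
import Mathlib


/-- Let `X` have at least two elements and let `ρ` be a binary relation on `X` such that
for every two distinct `x, y` at least one of `(x,y), (y,x), (x,x), (y,y)` belongs to `ρ`.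
Then `ρ` is minimal with this property iff `ρ = σ ∪ Δ_R` for some proper subset `R ⊊ X`
and some tournament `σ` on `X ∖ R` (an irreflexive relation such that for all distinct
`x, y ∈ X ∖ R` exactly one of `(x,y) ∈ σ`, `(y,x) ∈ σ` holds). -/
theorem stmt_17 {X : Type*} (hX : (2 : Cardinal) ≤ Cardinal.mk X)
    (ρ : Set (X × X))
    (hρ : ∀ x y : X, x ≠ y →
      ((x, y) ∈ ρ ∨ (y, x) ∈ ρ ∨ (x, x) ∈ ρ ∨ (y, y) ∈ ρ)) :
    (¬∃ ρ' : Set (X × X), ρ' ⊂ ρ ∧ ∀ x y : X, x ≠ y →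
        ((x, y) ∈ ρ' ∨ (y, x) ∈ ρ' ∨ (x, x) ∈ ρ' ∨ (y, y) ∈ ρ')) ↔
      ∃ R : Set X, R ≠ Set.univ ∧ ∃ σ : Set (X × X),
        (∀ p ∈ σ, p.1 ∉ R ∧ p.2 ∉ R) ∧
        (∀ x : X, (x, x) ∉ σ) ∧
        (∀ x y : X, x ∉ R → y ∉ R → x ≠ y →
          ((x, y) ∈ σ ∧ (y, x) ∉ σ) ∨ ((x, y) ∉ σ ∧ (y, x) ∈ σ)) ∧
        ρ = σ ∪ {p : X × X | p.1 = p.2 ∧ p.1 ∈ R} := by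
  classical
  constructor
  · intro hmin
    -- key: for any (a,b) ∈ ρ with an "extra" witness, minimality is violated;
    -- first, a general removal lemma
    have hrem : ∀ p ∈ ρ,
        ¬ (∀ x y : X, x ≠ y → ((x, y) ∈ ρ \ {p} ∨ (y, x) ∈ ρ \ {p} ∨
            (x, x) ∈ ρ \ {p} ∨ (y, y) ∈ ρ \ {p})) := by
      intro p hp hP
      exact hmin ⟨ρ \ {p}, ⟨Set.diff_subset, fun h => (h hp).2 rfl⟩, hP⟩
    -- σ off-diagonal in ρ has endpoints with no loop
    have hloop1 : ∀ a b : X, (a, b) ∈ ρ → a ≠ b → (a, a) ∉ ρ := by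
      intro a b hab hne haa
      apply hrem (a, b) hab
      intro x y hxy
      rcases hρ x y hxy with h | h | h | h
      · by_cases he : (x, y) = (a, b)
        · rw [Prod.mk.injEq] at he
          obtain ⟨rfl, rfl⟩ := he
          exact Or.inr (Or.inr (Or.inl ⟨haa, by simp only [Set.mem_singleton_iff, Prod.mk.injEq]; tauto⟩))
        · exact Or.inl ⟨h, he⟩
      · by_cases he : (y, x) = (a, b)
        · rw [Prod.mk.injEq] at he
          obtain ⟨rfl, rfl⟩ := he
          exact Or.inr (Or.inr (Or.inr ⟨haa, by simp only [Set.mem_singleton_iff, Prod.mk.injEq]; tauto⟩))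
        · exact Or.inr (Or.inl ⟨h, he⟩)
      · refine Or.inr (Or.inr (Or.inl ⟨h, fun he => ?_⟩))
        rw [Set.mem_singleton_iff, Prod.mk.injEq] at he
        exact hne (he.1.symm.trans he.2)
      · refine Or.inr (Or.inr (Or.inr ⟨h, fun he => ?_⟩))
        rw [Set.mem_singleton_iff, Prod.mk.injEq] at he
        exact hne (he.1.symm.trans he.2)
    have hloop2 : ∀ a b : X, (a, b) ∈ ρ → a ≠ b → (b, b) ∉ ρ := by
      intro a b hab hne hbb
      apply hrem (a, b) hab
      intro x y hxy
      rcases hρ x y hxy with h | h | h | h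
      · by_cases he : (x, y) = (a, b)
        · rw [Prod.mk.injEq] at he
          obtain ⟨rfl, rfl⟩ := he
          exact Or.inr (Or.inr (Or.inr ⟨hbb, by simp only [Set.mem_singleton_iff, Prod.mk.injEq]; tauto⟩))
        · exact Or.inl ⟨h, he⟩
      · by_cases he : (y, x) = (a, b)
        · rw [Prod.mk.injEq] at he
          obtain ⟨rfl, rfl⟩ := he
          exact Or.inr (Or.inr (Or.inl ⟨hbb, by simp only [Set.mem_singleton_iff, Prod.mk.injEq]; tauto⟩))
        · exact Or.inr (Or.inl ⟨h, he⟩)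
      · refine Or.inr (Or.inr (Or.inl ⟨h, fun he => ?_⟩))
        rw [Set.mem_singleton_iff, Prod.mk.injEq] at he
        exact hne (he.1.symm.trans he.2)
      · refine Or.inr (Or.inr (Or.inr ⟨h, fun he => ?_⟩))
        rw [Set.mem_singleton_iff, Prod.mk.injEq] at he
        exact hne (he.1.symm.trans he.2)
    -- no two opposite arcs
    have hopp : ∀ a b : X, a ≠ b → (a, b) ∈ ρ → (b, a) ∉ ρ := by
      intro a b hne hab hba
      apply hrem (a, b) hab
      intro x y hxy
      rcases hρ x y hxy with h | h | h | h
      · by_cases he : (x, y) = (a, b)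
        · rw [Prod.mk.injEq] at he
          obtain ⟨rfl, rfl⟩ := he
          refine Or.inr (Or.inl ⟨hba, fun he => ?_⟩)
          rw [Set.mem_singleton_iff, Prod.mk.injEq] at he; tauto
        · exact Or.inl ⟨h, he⟩
      · by_cases he : (y, x) = (a, b)
        · rw [Prod.mk.injEq] at he
          obtain ⟨rfl, rfl⟩ := he
          refine Or.inl ⟨hba, fun he => ?_⟩
          rw [Set.mem_singleton_iff, Prod.mk.injEq] at he; tauto
        · exact Or.inr (Or.inl ⟨h, he⟩)
      · refine Or.inr (Or.inr (Or.inl ⟨h, fun he => ?_⟩))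
        rw [Set.mem_singleton_iff, Prod.mk.injEq] at he
        exact hne (he.1.symm.trans he.2)
      · refine Or.inr (Or.inr (Or.inr ⟨h, fun he => ?_⟩))
        rw [Set.mem_singleton_iff, Prod.mk.injEq] at he
        exact hne (he.1.symm.trans he.2)
    refine ⟨{x | (x, x) ∈ ρ}, ?_, {p | p ∈ ρ ∧ p.1 ≠ p.2}, ?_, ?_, ?_, ?_⟩
    · -- R ≠ univ
      intro hR
      have hall : ∀ x : X, (x, x) ∈ ρ := fun x => (Set.eq_univ_iff_forall.mp hR) x
      obtain ⟨x0, -, -⟩ := Cardinal.two_le_iff.mp hX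
      apply hrem (x0, x0) (hall x0)
      intro x y hxy
      by_cases hx : x = x0
      · subst hx
        refine Or.inr (Or.inr (Or.inr ⟨hall y, fun he => ?_⟩))
        rw [Set.mem_singleton_iff, Prod.mk.injEq] at he; exact hxy he.1.symm
      · refine Or.inr (Or.inr (Or.inl ⟨hall x, fun he => ?_⟩))
        rw [Set.mem_singleton_iff, Prod.mk.injEq] at he; exact hx he.1
    · rintro ⟨a, b⟩ ⟨hab, hne⟩
      exact ⟨hloop1 a b hab hne, hloop2 a b hab hne⟩
    · exact fun x h => h.2 rfl
    · intro x y hx hy hxy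
      simp only [Set.mem_setOf_eq] at hx hy
      have := hρ x y hxy
      have hor : (x, y) ∈ ρ ∨ (y, x) ∈ ρ := by tauto
      rcases hor with h | h
      · exact Or.inl ⟨⟨h, hxy⟩, fun h' => hopp x y hxy h h'.1⟩
      · exact Or.inr ⟨fun h' => hopp y x hxy.symm h h'.1, ⟨h, hxy.symm⟩⟩
    · ext ⟨a, b⟩
      simp only [Set.mem_union, Set.mem_setOf_eq]
      constructor
      · intro h
        by_cases hab : a = b
        · subst hab; exact Or.inr ⟨rfl, h⟩
        · exact Or.inl ⟨h, hab⟩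
      · rintro (⟨h, _⟩ | ⟨rfl, h⟩) <;> exact h
  · rintro ⟨R, hR, σ, hσR, hirr, htour, rfl⟩ ⟨ρ', hsub, hP⟩
    obtain ⟨p, hpρ, hpρ'⟩ := Set.exists_of_ssubset hsub
    obtain ⟨a, b⟩ := p
    rcases hpρ with hσ | ⟨heq, haR⟩
    · -- off-diagonal arc removed
      obtain ⟨ha, hb⟩ := hσR _ hσ
      have hne : a ≠ b := fun h => hirr a (h ▸ hσ)
      rcases hP a b hne with h | h | h | h
      · exact hpρ' h
      · rcases hsub.1 h with h' | ⟨h', _⟩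
        · rcases htour a b ha hb hne with ⟨_, hno⟩ | ⟨hno, _⟩
          · exact hno h'
          · exact hno hσ
        · exact hne (h'.symm)
      · rcases hsub.1 h with h' | ⟨_, h'⟩
        · exact hirr a h'
        · exact ha h'
      · rcases hsub.1 h with h' | ⟨_, h'⟩
        · exact hirr b h'
        · exact hb h'
    · -- a loop removed: then R must be everything
      simp only at heq haR
      subst heq
      apply hR
      apply Set.eq_univ_iff_forall.mpr
      intro z
      by_cases hz : z = a
      · exact hz ▸ haR
      · rcases hP z a hz with h | h | h | h
        · rcases hsub.1 h with h' | ⟨h', _⟩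
          · exact absurd haR (hσR _ h').2
          · exact absurd h' hz
        · rcases hsub.1 h with h' | ⟨h', _⟩
          · exact absurd haR (hσR _ h').1
          · exact absurd h'.symm hz
        · rcases hsub.1 h with h' | ⟨_, h'⟩
          · exact absurd h' (hirr z)
          · exact h'
        · exact absurd h hpρ'
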